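/- Let X be a finite subset of α with n = |X| ≥ 3 so that I = I(n) ≥ 2. Let x⁺ ∈ α with x⁺ ∉ X and let x⁻ ∈ X, and suppose x⁻ ≤ x_(I−1) and x⁺ > x_(I). Set X' = (X \ {x⁻}) ∪ {x⁺}, so |X'| = n and the median index is unchanged. Then L(X') = ({x_(I)} ∪ L(X)) \ {x⁻} and R(X') = ({x⁺} ∪ R(X)) \ {x_(I)}. -/

import Mathlib

open Finset

/-- Median index `I(n) = ⌈n/2⌉`. -/
def medianIdx (n : ℕ) : ℕ := (n + 1) / 2

/-- 1-indexed rank of `x` in `X`: the number of elements of `X` that are `≤ x`.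
For `x ∈ X`, `rank X x = i` means `x` is the `i`-th smallest element of `X`. -/
def rank {α : Type*} [LinearOrder α] (X : Finset α) (x : α) : ℕ :=
  (X.filter (fun y => y ≤ x)).card

/-- Left part of the median partition: elements of rank `< I(|X|)`. -/
def medL {α : Type*} [LinearOrder α] (X : Finset α) : Finset α :=
  X.filter (fun x => rank X x < medianIdx X.card)

/-- Right part of the median partition: elements of rank `≥ I(|X|)`. -/
def medR {α : Type*} [LinearOrder α] (X : Finset α) : Finset α :=
  X.filter (fun x => medianIdx X.card ≤ rank X x)

private lemma rank_mono {α : Type*} [LinearOrder α] (X : Finset α) {a b : α} (h : a ≤ b) :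
    rank X a ≤ rank X b := by
  apply Finset.card_le_card
  intro y hy
  simp only [Finset.mem_filter] at *
  exact ⟨hy.1, le_trans hy.2 h⟩

private lemma rank_lt_of_lt {α : Type*} [LinearOrder α] {X : Finset α} {a b : α}
    (hb : b ∈ X) (h : a < b) : rank X a < rank X b := by
  apply Finset.card_lt_card
  constructor
  · intro y hy
    simp only [Finset.mem_filter] at *
    exact ⟨hy.1, le_trans hy.2 h.le⟩
  · intro hsub
    have := hsub (by simp [Finset.mem_filter, hb] : b ∈ X.filter (fun y => y ≤ b))
    simp only [Finset.mem_filter] at this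
    exact absurd this.2 (not_le.mpr h)

private lemma le_of_rank_le {α : Type*} [LinearOrder α] {X : Finset α} {a b : α}
    (ha : a ∈ X) (h : rank X a ≤ rank X b) : a ≤ b := by
  by_contra hab
  exact absurd h (not_le.mpr (rank_lt_of_lt ha (not_le.mp hab)))

theorem median_replace_right_left {α : Type*} [LinearOrder α]
    (X : Finset α) (hn : 3 ≤ X.card)
    (xIm1 : α) (hxIm1 : xIm1 ∈ X) (hrankm1 : rank X xIm1 = medianIdx X.card - 1)
    (xI : α) (hxI : xI ∈ X) (hrankI : rank X xI = medianIdx X.card)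
    (xp : α) (hxp : xp ∉ X) (xm : α) (hxm : xm ∈ X)
    (hmle : xm ≤ xIm1) (hpgt : xI < xp)
    (X' : Finset α) (hX' : X' = (X \ {xm}) ∪ {xp}) :
    medL X' = (insert xI (medL X)) \ {xm} ∧
    medR X' = (insert xp (medR X)) \ {xI} := by
  set I := medianIdx X.card with hIdef
  have hI2 : 2 ≤ I := by
    simp only [hIdef, medianIdx]; omega
  -- xIm1 < xI
  have hlt : xIm1 < xI := by
    by_contra h
    have := rank_mono X (not_lt.mp h)
    rw [hrankI, hrankm1] at this
    omega
  -- membership in X'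
  have hmem : ∀ x, x ∈ X' ↔ (x ∈ X ∧ x ≠ xm) ∨ x = xp := by
    intro x
    simp [hX', Finset.mem_sdiff, Finset.mem_union]
    exact or_comm
  -- card X' = card X
  have hcard : X'.card = X.card := by
    rw [hX', Finset.sdiff_singleton_eq_erase,
      Finset.card_union_of_disjoint (by
        simp only [Finset.disjoint_singleton_right, Finset.mem_erase]
        exact fun h => hxp h.2),
      Finset.card_erase_of_mem hxm, Finset.card_singleton]
    omega
  have hI' : medianIdx X'.card = I := by rw [hcard]
  -- xm ≤ anything ≥ xIm1; xm < xI
  have hmxI : xm < xI := lt_of_le_of_lt hmle hlt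
  have hxIX' : xI ∈ X' := (hmem xI).mpr (Or.inl ⟨hxI, fun h => absurd h (by rintro rfl; exact absurd rfl (ne_of_gt hmxI))⟩)
  -- rank of xI in X'
  have hrI' : rank X' xI = I - 1 := by
    have : X'.filter (fun y => y ≤ xI) = (X.filter (fun y => y ≤ xI)).erase xm := by
      rw [hX', Finset.sdiff_singleton_eq_erase, Finset.filter_union, Finset.filter_erase]
      have : ({xp} : Finset α).filter (fun y => y ≤ xI) = ∅ := by
        simp [Finset.filter_singleton, not_le.mpr hpgt]
      rw [this, Finset.union_empty]
    rw [rank, this, Finset.card_erase_of_mem (by simp [Finset.mem_filter, hxm, hmxI.le]), ← rank, hrankI]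
  -- characterization of medL X'
  have hcharL' : ∀ x, x ∈ medL X' ↔ x ∈ X' ∧ x ≤ xI := by
    intro x
    simp only [medL, Finset.mem_filter, hI']
    constructor
    · rintro ⟨hx, hr⟩
      refine ⟨hx, le_of_rank_le hx ?_⟩
      rw [hrI']; omega
    · rintro ⟨hx, hle⟩
      refine ⟨hx, ?_⟩
      have := rank_mono X' hle
      rw [hrI'] at this
      omega
  -- characterization of medL X
  have hcharL : ∀ x, x ∈ medL X ↔ x ∈ X ∧ x ≤ xIm1 := by
    intro x
    simp only [medL, Finset.mem_filter, ← hIdef]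
    constructor
    · rintro ⟨hx, hr⟩
      refine ⟨hx, le_of_rank_le hx ?_⟩
      rw [hrankm1]; omega
    · rintro ⟨hx, hle⟩
      refine ⟨hx, ?_⟩
      have := rank_mono X hle
      rw [hrankm1] at this
      omega
  -- x ∈ X, x ≤ xI ↔ x ≤ xIm1 ∨ x = xI
  have hsplit : ∀ x ∈ X, (x ≤ xI ↔ x ≤ xIm1 ∨ x = xI) := by
    intro x hx
    constructor
    · intro hle
      rcases eq_or_lt_of_le hle with h | h
      · exact Or.inr h
      · left
        by_contra hc
        have h1 := rank_lt_of_lt hxI h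
        have h2 := rank_lt_of_lt hx (not_le.mp hc)
        rw [hrankI, hrankm1] at *
        omega
    · rintro (h | rfl)
      · exact le_trans h hlt.le
      · exact le_refl _
  constructor
  · ext x
    rw [hcharL' x, hmem x]
    simp only [Finset.mem_sdiff, Finset.mem_insert, Finset.mem_singleton, hcharL x]
    constructor
    · rintro ⟨(⟨hx, hne⟩ | rfl), hle⟩
      · rcases (hsplit x hx).mp hle with h | rfl
        · exact ⟨Or.inr ⟨hx, h⟩, hne⟩
        · exact ⟨Or.inl rfl, hne⟩
      · exact absurd hle (not_le.mpr hpgt)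
    · rintro ⟨(rfl | ⟨hx, hle⟩), hne⟩
      · exact ⟨Or.inl ⟨hxI, hne⟩, le_refl _⟩
      · exact ⟨Or.inl ⟨hx, hne⟩, le_trans hle hlt.le⟩
  · -- medR
    have hcharR' : ∀ x, x ∈ medR X' ↔ x ∈ X' ∧ xI < x := by
      intro x
      simp only [medR, Finset.mem_filter, hI']
      constructor
      · rintro ⟨hx, hr⟩
        refine ⟨hx, ?_⟩
        by_contra hc
        have := rank_mono X' (not_lt.mp hc)
        rw [hrI'] at this
        omega
      · rintro ⟨hx, hlt'⟩
        refine ⟨hx, ?_⟩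
        have := rank_lt_of_lt hx hlt'
        rw [hrI'] at this
        omega
    have hcharR : ∀ x, x ∈ medR X ↔ x ∈ X ∧ xIm1 < x := by
      intro x
      simp only [medR, Finset.mem_filter, ← hIdef]
      constructor
      · rintro ⟨hx, hr⟩
        refine ⟨hx, ?_⟩
        by_contra hc
        have := rank_mono X (not_lt.mp hc)
        rw [hrankm1] at this
        omega
      · rintro ⟨hx, hlt'⟩
        refine ⟨hx, ?_⟩
        have := rank_lt_of_lt hx hlt'
        rw [hrankm1] at this
        omega
    ext x
    rw [hcharR' x, hmem x]
    simp only [Finset.mem_sdiff, Finset.mem_insert, Finset.mem_singleton, hcharR x]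
    constructor
    · rintro ⟨(⟨hx, hne⟩ | rfl), hlt'⟩
      · exact ⟨Or.inr ⟨hx, lt_of_lt_of_le hlt hlt'.le⟩, ne_of_gt hlt'⟩
      · exact ⟨Or.inl rfl, ne_of_gt hpgt⟩
    · rintro ⟨(rfl | ⟨hx, hgt⟩), hne⟩
      · exact ⟨Or.inr rfl, hpgt⟩
      · have hxIlt : xI < x := by
          rcases lt_trichotomy x xI with h | h | h
          · exact absurd ((hsplit x hx).mp h.le) (by push_neg; exact ⟨hgt, hne⟩)
          · exact absurd h hne
          · exact h
        exact ⟨Or.inl ⟨hx, ne_of_gt (lt_of_le_of_lt hmle (lt_trans hlt hxIlt))⟩, hxIlt⟩
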